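/- arXiv:1706.09845 — 2 statements merged into one kernel-verified Lean document; each statement's English description precedes it below -/
import Mathlib

section
/- If R is a graded algebra with entropy H(R) = 1 + ε, and a, b ∈ ⊕_{i≤d} R_i generate a free subalgebra, then d ≥ 1 / log₂(1 + ε). -/
open Filter Module

section aux
variable {k A : Type*} [Field k] [Ring A] [Algebra k A]
  (𝒜 : ℕ → Submodule k A) [GradedAlgebra 𝒜]

lemma aux_fd (hfin : ∀ i, FiniteDimensional k (𝒜 i)) (n : ℕ) :
    FiniteDimensional k ↥(⨆ i ≤ n, 𝒜 i) := by
  have e : (⨆ i ≤ n, 𝒜 i) = ⨆ i : {i : ℕ // i ≤ n}, 𝒜 i := by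
    rw [iSup_subtype]
  rw [e]
  have : Finite {i : ℕ // i ≤ n} := Set.Finite.to_subtype (Set.finite_Iic n)
  exact Submodule.finiteDimensional_iSup _

lemma aux_mono {m n : ℕ} (h : m ≤ n) : (⨆ i ≤ m, 𝒜 i) ≤ ⨆ i ≤ n, 𝒜 i :=
  biSup_mono fun _ hi => hi.trans h

lemma aux_mul (m n : ℕ) : (⨆ i ≤ m, 𝒜 i) * (⨆ i ≤ n, 𝒜 i) ≤ ⨆ i ≤ m + n, 𝒜 i := by
  simp only [Submodule.iSup_mul, Submodule.mul_iSup]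
  refine iSup₂_le fun i hi => iSup₂_le fun j hj => ?_
  refine le_trans ?_ (le_iSup₂ (f := fun i (_ : i ≤ m + n) => 𝒜 i) (j + i) (add_le_add hj hi))
  exact Submodule.mul_le.2 fun x hx y hy => SetLike.mul_mem_graded hx hy

end aux

lemma aux_equiv_monomial {k : Type*} [Field k] (l : List Bool) :
    (FreeAlgebra.equivMonoidAlgebraFreeMonoid (R := k) (X := Bool))
      ((l.map (FreeAlgebra.ι k)).prod)
      = MonoidAlgebra.single (FreeMonoid.ofList l) 1 := by
  induction l with
  | nil => simp [MonoidAlgebra.one_def, FreeMonoid.ofList_nil]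
  | cons x l ih =>
    rw [List.map_cons, List.prod_cons, map_mul, ih, FreeMonoid.ofList_cons]
    rw [show (FreeAlgebra.equivMonoidAlgebraFreeMonoid (R := k) (X := Bool))
        (FreeAlgebra.ι k x) = MonoidAlgebra.single (FreeMonoid.of x) 1 by
      simp [FreeAlgebra.equivMonoidAlgebraFreeMonoid, MonoidAlgebra.of_apply]]
    rw [MonoidAlgebra.single_mul_single, one_mul]

lemma aux_li {k : Type*} [Field k] :
    LinearIndependent k
      (fun l : List Bool => ((l.map (FreeAlgebra.ι k)).prod : FreeAlgebra k Bool)) := by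
  apply LinearIndependent.of_comp
    (FreeAlgebra.equivMonoidAlgebraFreeMonoid (R := k) (X := Bool)).toLinearMap
  have h1 : LinearIndependent k (fun l : FreeMonoid Bool =>
      (MonoidAlgebra.single l 1 : MonoidAlgebra k (FreeMonoid Bool))) := by
    have := (MonoidAlgebra.basis (FreeMonoid Bool) k).linearIndependent
    convert this using 1
    funext l
    rw [MonoidAlgebra.basis_apply]
  have h2 := h1.comp FreeMonoid.ofList FreeMonoid.ofList.injective
  convert h2 using 1
  funext l
  exact aux_equiv_monomial l
  all_goals rfl

lemma aux_li_A {k A : Type*} [Field k] [Ring A] [Algebra k A] (g : Bool → A)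
    (hfree : Function.Injective
      ((FreeAlgebra.lift k g) : FreeAlgebra k Bool →ₐ[k] A)) :
    LinearIndependent k (fun l : List Bool => (l.map g).prod) := by
  have h := (aux_li (k := k)).map' (FreeAlgebra.lift k g).toLinearMap
    (LinearMap.ker_eq_bot.mpr hfree)
  convert h using 1
  funext l
  simp only [Function.comp_apply, AlgHom.toLinearMap_apply, map_list_prod, List.map_map]
  exact congrArg _ (List.map_congr_left fun x _ => by simp [FreeAlgebra.lift_ι_apply]).symm
  all_goals rfl

lemma aux_word_mem {k A : Type*} [Field k] [Ring A] [Algebra k A]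
    (𝒜 : ℕ → Submodule k A) [GradedAlgebra 𝒜] (d : ℕ) (g : Bool → A)
    (hg : ∀ t, g t ∈ ⨆ i ≤ d, 𝒜 i) (l : List Bool) :
    (l.map g).prod ∈ ⨆ i ≤ l.length * d, 𝒜 i := by
  induction l with
  | nil =>
    simp only [List.map_nil, List.prod_nil, List.length_nil, Nat.zero_mul]
    exact le_iSup₂ (f := fun i (_ : i ≤ 0) => 𝒜 i) 0 le_rfl (SetLike.one_mem_graded 𝒜)
  | cons t l ih =>
    have h1 : g t * (l.map g).prod ∈ ⨆ i ≤ d + l.length * d, 𝒜 i :=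
      aux_mul 𝒜 d _ (Submodule.mul_mem_mul (hg t) ih)
    have h2 : d + l.length * d = (t :: l).length * d := by
      simp [List.length_cons, Nat.succ_mul, Nat.add_comm]
    rw [List.map_cons, List.prod_cons]
    exact h2 ▸ h1

lemma aux_card {k A : Type*} [Field k] [Ring A] [Algebra k A]
    (𝒜 : ℕ → Submodule k A) [GradedAlgebra 𝒜]
    (hfin : ∀ i, FiniteDimensional k (𝒜 i)) (d : ℕ) (g : Bool → A)
    (hg : ∀ t, g t ∈ ⨆ i ≤ d, 𝒜 i)
    (hfree : Function.Injective
      ((FreeAlgebra.lift k g) : FreeAlgebra k Bool →ₐ[k] A)) (n : ℕ) :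
    2 ^ n ≤ finrank k ↥(⨆ i ≤ n * d, 𝒜 i) := by
  haveI := aux_fd 𝒜 hfin (n * d)
  set S := (⨆ i ≤ n * d, 𝒜 i) with hS
  have hmem : ∀ c : List.Vector Bool n, (c.toList.map g).prod ∈ S := by
    intro c
    have := aux_word_mem 𝒜 d g hg c.toList
    rwa [c.toList_length] at this
  let F : List.Vector Bool n → S := fun c => ⟨(c.toList.map g).prod, hmem c⟩
  have hliF : LinearIndependent k F := by
    apply LinearIndependent.of_comp S.subtype
    have h2 := (aux_li_A g hfree).comp (fun c : List.Vector Bool n => c.toList)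
      (fun c c' h => List.Vector.eq _ _ h)
    exact h2
  have := hliF.fintype_card_le_finrank
  simpa [card_vector] using this

/-- If `R` is a graded algebra with entropy `H(R) = 1 + ε`, and `a, b` lie in
`⊕_{i ≤ d} R_i` and generate a free subalgebra, then `d ≥ 1 / log₂ (1 + ε)`. -/
theorem stmt0 {k A : Type*} [Field k] [Ring A] [Algebra k A]
    (𝒜 : ℕ → Submodule k A) [GradedAlgebra 𝒜]
    (hfin : ∀ i, FiniteDimensional k (𝒜 i))
    (ε : ℝ) (hε : 0 < ε)
    (hH : Filter.limsup
        (fun n : ℕ => ((Module.finrank k ↥(⨆ i ≤ n, 𝒜 i) : ℝ)) ^ ((n : ℝ)⁻¹))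
        Filter.atTop = 1 + ε)
    (d : ℕ) (a b : A)
    (ha : a ∈ ⨆ i ≤ d, 𝒜 i) (hb : b ∈ ⨆ i ≤ d, 𝒜 i)
    (hfree : Function.Injective
      ((FreeAlgebra.lift k (fun t : Bool => if t then a else b)) :
        FreeAlgebra k Bool →ₐ[k] A)) :
    (d : ℝ) ≥ 1 / Real.logb 2 (1 + ε) := by
  set g : Bool → A := fun t => if t then a else b with hgdef
  have hg : ∀ t, g t ∈ ⨆ i ≤ d, 𝒜 i := by intro t; cases t <;> simpa [hgdef]
  have hcard := aux_card 𝒜 hfin d g hg hfree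
  set u : ℕ → ℝ := fun n : ℕ =>
      ((Module.finrank k ↥(⨆ i ≤ n, 𝒜 i) : ℝ)) ^ ((n : ℝ)⁻¹) with hu
  -- d ≠ 0
  have hd : 0 < d := by
    rcases Nat.eq_zero_or_pos d with h0 | h
    swap
    · exact h
    exfalso
    subst h0
    have h1 := hcard (finrank k ↥(⨆ i ≤ 0, 𝒜 i))
    simp only [Nat.mul_zero] at h1
    exact absurd h1 (Nat.lt_two_pow_self).not_ge
  -- lower bound along multiples of d
  have hbound : ∀ n : ℕ, 1 ≤ n → (2 : ℝ) ^ ((d : ℝ)⁻¹) ≤ u (n * d) := by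
    intro n hn
    have h1 : ((2 : ℝ) ^ n) ≤ (finrank k ↥(⨆ i ≤ n * d, 𝒜 i) : ℝ) := by
      exact_mod_cast hcard n
    have h2 : ((2 : ℝ) ^ n) ^ (((n * d : ℕ) : ℝ)⁻¹)
        ≤ (finrank k ↥(⨆ i ≤ n * d, 𝒜 i) : ℝ) ^ (((n * d : ℕ) : ℝ)⁻¹) :=
      Real.rpow_le_rpow (by positivity) h1 (by positivity)
    refine le_trans (le_of_eq ?_) h2
    rw [← Real.rpow_natCast (2 : ℝ) n, ← Real.rpow_mul (by norm_num)]
    congr 1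
    have hn' : (n : ℝ) ≠ 0 := by positivity
    have hd' : (d : ℝ) ≠ 0 := by positivity
    push_cast
    field_simp
  have hfreq : ∃ᶠ m in atTop, (2 : ℝ) ^ ((d : ℝ)⁻¹) ≤ u m := by
    rw [frequently_atTop]
    intro N
    refine ⟨(max N 1) * d, ?_, hbound _ (le_max_right N 1)⟩
    calc N ≤ max N 1 := le_max_left _ _
      _ ≤ max N 1 * d := Nat.le_mul_of_pos_right _ hd
  have h2d : (2 : ℝ) ^ ((d : ℝ)⁻¹) ≤ 1 + ε := by
    by_cases hbdd : IsBoundedUnder (· ≤ ·) atTop u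
    · have := le_limsup_of_frequently_le hfreq hbdd
      rwa [hH] at this
    · exfalso
      have hempty : {a : ℝ | ∀ᶠ n in atTop, u n ≤ a} = ∅ := by
        rw [Set.eq_empty_iff_forall_notMem]
        intro x hx
        exact hbdd ⟨x, hx⟩
      have : limsup u atTop = 0 := by
        rw [limsup_eq, hempty, Real.sInf_empty]
      rw [hH] at this
      linarith
  have hlogb : (d : ℝ)⁻¹ ≤ Real.logb 2 (1 + ε) := by
    have h := Real.logb_le_logb_of_le (b := 2) (by norm_num)
      (Real.rpow_pos_of_pos (by norm_num) _) h2d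
    rwa [Real.logb_rpow (by norm_num) (by norm_num)] at h
  have hdpos : (0 : ℝ) < d := by exact_mod_cast hd
  calc (1 : ℝ) / Real.logb 2 (1 + ε) ≤ 1 / (d : ℝ)⁻¹ :=
        one_div_le_one_div_of_le (inv_pos.mpr hdpos) hlogb
    _ = d := by rw [one_div, inv_inv]
end

section
/- Suppose W(1) is a set of d letters, and for each i, W(2^{i+1}) = C(2^i)·W(2^i) with C(2^i) ⊆ W(2^i). Then every word u of length 2^{i+1} that is a factor of some word in ⋃_j W(2^j) of length ≥ 2^{i+2} can be written such that any aligned length-2^{i+1} block lies in C(2^i)W(2^i) ∪ W(2^i)C(2^i). -/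
private lemma suffW {X : Type*} (W C : ℕ → Set (List X))
    (hrec : ∀ i, W (i + 1) = {l : List X | ∃ c ∈ C i, ∃ v ∈ W i, l = c ++ v})
    (i : ℕ) : ∀ m, ∀ u ∈ W (i + m), ∃ p w, w ∈ W i ∧ u = p ++ w := by
  intro m
  induction m with
  | zero => intro u hu; exact ⟨[], u, hu, by simp⟩
  | succ m ih =>
    intro u hu
    rw [show i + (m + 1) = (i + m) + 1 from rfl, hrec] at hu
    obtain ⟨c, hc, v, hv, rfl⟩ := hu
    obtain ⟨p, w, hw, rfl⟩ := ih v hv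
    exact ⟨c ++ p, w, hw, by simp⟩

private lemma prefC {X : Type*} (W C : ℕ → Set (List X))
    (hC : ∀ i, C i ⊆ W i)
    (hrec : ∀ i, W (i + 1) = {l : List X | ∃ c ∈ C i, ∃ v ∈ W i, l = c ++ v})
    (i : ℕ) : ∀ m, ∀ u ∈ W (i + 1 + m), ∃ c r, c ∈ C i ∧ u = c ++ r := by
  intro m
  induction m with
  | zero =>
    intro u hu
    rw [hrec] at hu
    obtain ⟨c, hc, v, hv, rfl⟩ := hu
    exact ⟨c, v, hc, rfl⟩
  | succ m ih =>
    intro u hu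
    rw [show i + 1 + (m + 1) = (i + 1 + m) + 1 from rfl, hrec] at hu
    obtain ⟨c', hc', v, hv, rfl⟩ := hu
    obtain ⟨c, r, hc, rfl⟩ := ih c' (hC _ hc')
    exact ⟨c, r ++ v, hc, by simp⟩

private lemma keyLem {X : Type*} (W C : ℕ → Set (List X))
    (hlen : ∀ i, ∀ l ∈ W i, l.length = 2 ^ i)
    (hC : ∀ i, C i ⊆ W i)
    (hrec : ∀ i, W (i + 1) = {l : List X | ∃ c ∈ C i, ∃ v ∈ W i, l = c ++ v})
    (i : ℕ) :
    ∀ k, ∀ u ∈ W (i + 1 + k), ∀ s, 2 ^ i ∣ s → s + 2 ^ (i + 1) ≤ u.length →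
      ∃ a b : List X,
        ((a ∈ C i ∧ b ∈ W i) ∨ (a ∈ W i ∧ b ∈ C i)) ∧
        (u.drop s).take (2 ^ (i + 1)) = a ++ b := by
  intro k
  induction k with
  | zero =>
    intro u hu s hs hfit
    have hl : u.length = 2 ^ (i + 1) := by rw [hlen _ u hu]
    have hs0 : s = 0 := by omega
    subst hs0
    rw [hrec] at hu
    obtain ⟨c, hc, v, hv, rfl⟩ := hu
    refine ⟨c, v, Or.inl ⟨hc, hv⟩, ?_⟩
    rw [List.drop_zero, List.take_of_length_le (by omega)]
  | succ k ih =>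
    intro u hu s hs hfit
    rw [show i + 1 + (k + 1) = (i + 1 + k) + 1 from rfl, hrec] at hu
    obtain ⟨c, hc, v, hv, rfl⟩ := hu
    have hcW := hC _ hc
    have hcl := hlen _ c hcW
    have hvl := hlen _ v hv
    have hfit' : s + 2 ^ (i + 1) ≤ c.length + v.length := by
      simpa using hfit
    by_cases h1 : s + 2 ^ (i + 1) ≤ c.length
    · obtain ⟨a, b, hab, heq⟩ := ih c hcW s hs h1
      refine ⟨a, b, hab, ?_⟩
      rw [List.drop_append, List.take_append]
      have h0 : 2 ^ (i + 1) - (c.drop s).length = 0 := by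
        rw [List.length_drop]; omega
      rw [h0, List.take_zero, List.append_nil, heq]
    · by_cases h2 : c.length ≤ s
      · have hdvd : 2 ^ i ∣ s - c.length := by
          refine Nat.dvd_sub hs ?_
          rw [hcl]
          exact pow_dvd_pow 2 (by omega)
        obtain ⟨a, b, hab, heq⟩ := ih v hv (s - c.length) hdvd (by omega)
        refine ⟨a, b, hab, ?_⟩
        rw [List.drop_append, List.drop_eq_nil_of_le h2,
          List.nil_append, heq]
      · -- s < c.length < s + 2^(i+1) : the block straddles the boundary
        push_neg at h1 h2
        have hseq : s = c.length - 2 ^ i := by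
          obtain ⟨a, rfl⟩ := hs
          have hP : 0 < 2 ^ i := Nat.pow_pos (by norm_num)
          have hclen : c.length = 2 ^ i * 2 ^ (k + 1) := by
            rw [hcl, ← pow_add]; ring_nf
          have ha1 : a < 2 ^ (k + 1) := by
            have := h2
            rw [hclen] at this
            exact lt_of_mul_lt_mul_left this (Nat.zero_le _)
          have ha2 : 2 ^ (k + 1) < a + 2 := by
            have h1' : 2 ^ i * 2 ^ (k + 1) < 2 ^ i * (a + 2) := by
              calc 2 ^ i * 2 ^ (k + 1) = c.length := hclen.symm
                _ < 2 ^ i * a + 2 ^ (i + 1) := h1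
                _ = 2 ^ i * (a + 2) := by rw [pow_succ]; ring
            exact lt_of_mul_lt_mul_left h1' (Nat.zero_le _)
          have : a = 2 ^ (k + 1) - 1 := by omega
          subst this
          rw [hclen]
          have h2k : 1 ≤ 2 ^ (k + 1) := Nat.one_le_two_pow
          rw [Nat.mul_sub, Nat.mul_one]
        obtain ⟨p, w, hw, rfl⟩ := suffW W C hrec i (1 + k) c
          (by rw [show i + (1 + k) = i + 1 + k by ring]; exact hcW)
        obtain ⟨c'', r, hc'', rfl⟩ := prefC W C hC hrec i k v hv
        have hwl := hlen _ w hw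
        have hcl'' := hlen _ c'' (hC _ hc'')
        have hpl : p.length = s := by
          have := hcl
          simp only [List.length_append] at this hseq
          omega
        refine ⟨w, c'', Or.inr ⟨hw, hc''⟩, ?_⟩
        rw [List.append_assoc, ← List.append_assoc w, ← hpl, List.drop_left]
        have hwc : (w ++ c'').length = 2 ^ (i + 1) := by
          rw [List.length_append, hwl, hcl'', pow_succ]; omega
        rw [← hwc, List.take_left]

/-- Block structure of the Bartholdi–Smoktunowicz construction: if
`W (i+1) = C i · W i` with `C i ⊆ W i` and words in `W i` have length `2^i`,
then any length-`2^(i+1)` block of a word of `⋃ⱼ W j` of length at least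
`2^(i+2)`, starting at a position divisible by `2^i`, lies in
`C i · W i ∪ W i · C i`. -/
theorem stmt18 {X : Type*} (W C : ℕ → Set (List X))
    (hlen : ∀ i, ∀ l ∈ W i, l.length = 2 ^ i)
    (hC : ∀ i, C i ⊆ W i)
    (hrec : ∀ i, W (i + 1) = {l : List X | ∃ c ∈ C i, ∃ v ∈ W i, l = c ++ v})
    (i j : ℕ) (u : List X) (hu : u ∈ W j) (hlong : 2 ^ (i + 2) ≤ u.length)
    (s : ℕ) (hs : 2 ^ i ∣ s) (hfit : s + 2 ^ (i + 1) ≤ u.length) :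
    ∃ a b : List X,
      ((a ∈ C i ∧ b ∈ W i) ∨ (a ∈ W i ∧ b ∈ C i)) ∧
      (u.drop s).take (2 ^ (i + 1)) = a ++ b := by
  have hj : i + 1 ≤ j := by
    have hl := hlen _ u hu
    rw [hl] at hlong
    have := (pow_le_pow_iff_right₀ (a := 2) (by norm_num)).mp hlong
    omega
  obtain ⟨k, rfl⟩ := Nat.exists_eq_add_of_le hj
  exact keyLem W C hlen hC hrec i k u hu s hs hfit
end
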